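/- arXiv:1511.01953 — 3 statements merged into one kernel-verified Lean document; each statement's English description precedes it below -/
import Mathlib

section
/- Suppose Δ_i = ∑_{j=i}^N λ₁_j − ∑_{j=i}^{N-1} λ₂_j − ρ_i + ϖ_i with all multipliers nonnegative. If λ₁_i > 0, λ₂_i = 0, ρ_i = 0, and ϖ_i = ϖ_{i+1} = 0, then Δ_i > Δ_{i+1}; consequently the water-filling power p_i = ∑_k ∑_j max(γ_k/Δ_i − 1/λ_{jk}, 0) (with γ_k > 0, λ_{jk} > 0) satisfies p_i ≤ p_{i+1}, with strict inequality whenever p_{i+1} > 0. -/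
theorem stmt_5 (N K : ℕ) (m : Fin K → ℕ)
    (lam1 lam2 ρ ϖ : ℕ → ℝ) (Δ : ℕ → ℝ)
    (γ : Fin K → ℝ) (lamc : (k : Fin K) → Fin (m k) → ℝ)
    (hγ : ∀ k, 0 < γ k) (hlamc : ∀ k j, 0 < lamc k j)
    (hlam1 : ∀ j, 0 ≤ lam1 j) (hlam2 : ∀ j, 0 ≤ lam2 j)
    (hρ : ∀ j, 0 ≤ ρ j) (hϖ : ∀ j, 0 ≤ ϖ j)
    (hΔ : ∀ i, Δ i = (∑ j ∈ Finset.Icc i N, lam1 j) - (∑ j ∈ Finset.Icc i (N - 1), lam2 j)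
        - ρ i + ϖ i)
    (p : ℕ → ℝ)
    (hp : ∀ i, p i = ∑ k, ∑ j, max (γ k / Δ i - 1 / lamc k j) 0)
    (i : ℕ) (hi : i < N)
    (h1 : 0 < lam1 i) (h2 : lam2 i = 0) (h3 : ρ i = 0)
    (h4 : ϖ i = 0) (h5 : ϖ (i + 1) = 0)
    (hΔpos : 0 < Δ (i + 1)) :
    Δ (i + 1) < Δ i ∧ p i ≤ p (i + 1) ∧ (0 < p (i + 1) → p i < p (i + 1)) := by
  have hiN : i ≤ N - 1 := Nat.le_sub_one_of_lt hi
  have e1 : ∑ j ∈ Finset.Icc i N, lam1 j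
      = lam1 i + ∑ j ∈ Finset.Icc (i+1) N, lam1 j := by
    rw [Finset.Icc_eq_cons_Ioc (le_of_lt hi), Finset.sum_cons, ← Finset.Icc_add_one_left_eq_Ioc]
  have e2 : ∑ j ∈ Finset.Icc i (N-1), lam2 j
      = lam2 i + ∑ j ∈ Finset.Icc (i+1) (N-1), lam2 j := by
    rw [Finset.Icc_eq_cons_Ioc hiN, Finset.sum_cons, ← Finset.Icc_add_one_left_eq_Ioc]
  have hlt : Δ (i + 1) < Δ i := by
    rw [hΔ i, hΔ (i+1), e1, e2, h2, h3, h4, h5]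
    have := hρ (i+1)
    linarith
  have ht1 : 0 < Δ i := lt_trans hΔpos hlt
  have key : ∀ (k : Fin K) (j : Fin (m k)),
      max (γ k / Δ i - 1 / lamc k j) 0 ≤ max (γ k / Δ (i+1) - 1 / lamc k j) 0 := by
    intro k j
    have : γ k / Δ i ≤ γ k / Δ (i+1) :=
      div_le_div_of_nonneg_left (hγ k).le hΔpos hlt.le
    exact max_le_max (by linarith) le_rfl
  have hple : p i ≤ p (i + 1) := by
    rw [hp, hp]
    exact Finset.sum_le_sum fun k _ => Finset.sum_le_sum fun j _ => key k j
  refine ⟨hlt, hple, ?_⟩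
  intro hpos
  rw [hp] at hpos
  have hpos' : ∑ k : Fin K, (0:ℝ) < ∑ k, ∑ j, max (γ k / Δ (i+1) - 1 / lamc k j) 0 := by
    simpa using hpos
  obtain ⟨k, hk, hkpos⟩ := Finset.exists_lt_of_sum_lt hpos'
  have hkpos' : ∑ j : Fin (m k), (0:ℝ) < ∑ j, max (γ k / Δ (i+1) - 1 / lamc k j) 0 := by
    simpa using hkpos
  obtain ⟨j, hj, hjpos⟩ := Finset.exists_lt_of_sum_lt hkpos'
  have hy : 0 < γ k / Δ (i+1) - 1 / lamc k j := by
    by_contra h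
    push_neg at h
    rw [max_eq_right h] at hjpos
    exact lt_irrefl _ hjpos
  have hxy : γ k / Δ i < γ k / Δ (i+1) := by
    apply div_lt_div_of_pos_left (hγ k) hΔpos hlt
  have hterm : max (γ k / Δ i - 1 / lamc k j) 0 < max (γ k / Δ (i+1) - 1 / lamc k j) 0 := by
    rw [max_eq_left hy.le]
    exact max_lt (by linarith) hy
  have hinner : ∑ j, max (γ k / Δ i - 1 / lamc k j) 0
      < ∑ j, max (γ k / Δ (i+1) - 1 / lamc k j) 0 :=
    Finset.sum_lt_sum (fun j _ => key k j) ⟨j, Finset.mem_univ j, hterm⟩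
  rw [hp, hp]
  exact Finset.sum_lt_sum (fun k _ => Finset.sum_le_sum fun j _ => key k j)
    ⟨k, Finset.mem_univ k, hinner⟩
end

section
/- Let g(p) = log(1 + a p)/(p + ε) with a > 0, ε > 0, let p° be its unique maximizer on (0,∞), and suppose total available energy E_tol > 0 and time horizon t > 0. Then the constrained maximizer of τ · log(1 + a p) subject to τ(p + ε) ≤ E_tol, 0 < τ ≤ t, 0 < p ≤ p_peak is: p* = p° if p° < p_peak and E_tol < t(p° + ε); p* = p_peak if p° ≥ p_peak, or if p° < p_peak and E_tol > t(p_peak + ε); and p* = E_tol/t − ε otherwise; with τ* = min(t, E_tol/(p* + ε)). -/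
private lemma log_concave3 (a : ℝ) (ha : 0 < a) {x q r : ℝ} (hx : 0 < x)
    (hxq : x < q) (hqr : q < r) :
    (r - q) * Real.log (1 + a * x) + (q - x) * Real.log (1 + a * r)
      ≤ (r - x) * Real.log (1 + a * q) := by
  have hrx : 0 < r - x := by linarith
  have h1 : (0:ℝ) < 1 + a * x := by nlinarith
  have h2 : (0:ℝ) < 1 + a * r := by nlinarith
  have hl : 0 ≤ (r - q) / (r - x) := div_nonneg (by linarith) hrx.le
  have hm : 0 ≤ (q - x) / (r - x) := div_nonneg (by linarith) hrx.le
  have hlm : (r - q) / (r - x) + (q - x) / (r - x) = 1 := by field_simp; ring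
  have h3 := strictConcaveOn_log_Ioi.concaveOn.2 (Set.mem_Ioi.2 h1) (Set.mem_Ioi.2 h2) hl hm hlm
  simp only [smul_eq_mul] at h3
  have heq : (r - q) / (r - x) * (1 + a * x) + (q - x) / (r - x) * (1 + a * r) = 1 + a * q := by
    field_simp; ring
  rw [heq] at h3
  have := mul_le_mul_of_nonneg_left h3 hrx.le
  calc (r - q) * Real.log (1 + a * x) + (q - x) * Real.log (1 + a * r)
      = (r - x) * ((r - q) / (r - x) * Real.log (1 + a * x)
          + (q - x) / (r - x) * Real.log (1 + a * r)) := by field_simp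
    _ ≤ (r - x) * Real.log (1 + a * q) := this

/-- if g q < g x with x < q < r then g r < g q -/
private lemma keyA (a ε : ℝ) (ha : 0 < a) (hε : 0 < ε) {x q r : ℝ} (hx : 0 < x)
    (hxq : x < q) (hqr : q < r)
    (h : Real.log (1 + a * q) / (q + ε) < Real.log (1 + a * x) / (x + ε)) :
    Real.log (1 + a * r) / (r + ε) < Real.log (1 + a * q) / (q + ε) := by
  have hxε : 0 < x + ε := by linarith
  have hqε : 0 < q + ε := by linarith
  have hrε : 0 < r + ε := by linarith
  set c := Real.log (1 + a * q) / (q + ε) with hc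
  have hcq : Real.log (1 + a * q) = c * (q + ε) := by rw [hc, div_mul_cancel₀ _ (ne_of_gt hqε)]
  have hx' : c * (x + ε) < Real.log (1 + a * x) := by
    rw [lt_div_iff₀ hxε] at h; linarith
  have hcon := log_concave3 a ha hx hxq hqr
  rw [div_lt_iff₀ hrε]
  by_contra hcon2
  push_neg at hcon2
  have h4 := mul_lt_mul_of_pos_left hx' (show (0:ℝ) < r - q by linarith)
  have h5 := mul_le_mul_of_nonneg_left hcon2 (show (0:ℝ) ≤ q - x by linarith)
  nlinarith [h4, h5, hcon, hcq]

/-- if g q < g r with x < q < r then g x < g q -/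
private lemma keyB (a ε : ℝ) (ha : 0 < a) (hε : 0 < ε) {x q r : ℝ} (hx : 0 < x)
    (hxq : x < q) (hqr : q < r)
    (h : Real.log (1 + a * q) / (q + ε) < Real.log (1 + a * r) / (r + ε)) :
    Real.log (1 + a * x) / (x + ε) < Real.log (1 + a * q) / (q + ε) := by
  have hxε : 0 < x + ε := by linarith
  have hqε : 0 < q + ε := by linarith
  have hrε : 0 < r + ε := by linarith
  set c := Real.log (1 + a * q) / (q + ε) with hc
  have hcq : Real.log (1 + a * q) = c * (q + ε) := by rw [hc, div_mul_cancel₀ _ (ne_of_gt hqε)]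
  have hr' : c * (r + ε) < Real.log (1 + a * r) := by
    rw [lt_div_iff₀ hrε] at h; linarith
  have hcon := log_concave3 a ha hx hxq hqr
  rw [div_lt_iff₀ hxε]
  by_contra hcon2
  push_neg at hcon2
  have h4 := mul_lt_mul_of_pos_left hr' (show (0:ℝ) < q - x by linarith)
  have h5 := mul_le_mul_of_nonneg_left hcon2 (show (0:ℝ) ≤ r - q by linarith)
  nlinarith [h4, h5, hcon, hcq]
private lemma Lnonneg (a : ℝ) (ha : 0 < a) {p : ℝ} (hp : 0 < p) :
    0 ≤ Real.log (1 + a * p) :=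
  Real.log_nonneg (by nlinarith)

private lemma Lmono (a : ℝ) (ha : 0 < a) {p q : ℝ} (hp : 0 < p) (hpq : p ≤ q) :
    Real.log (1 + a * p) ≤ Real.log (1 + a * q) :=
  Real.log_le_log (by nlinarith) (by nlinarith)

/-- energy bound : τ * L p ≤ E * G p -/
private lemma ebound (a ε E : ℝ) (ha : 0 < a) (hε : 0 < ε) {τ p : ℝ}
    (hp : 0 < p) (hτ : 0 < τ) (hfe : τ * (p + ε) ≤ E) :
    τ * Real.log (1 + a * p) ≤ E * (Real.log (1 + a * p) / (p + ε)) := by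
  have hpε : 0 < p + ε := by linarith
  have h1 : τ * Real.log (1 + a * p)
      = (τ * (p + ε)) * (Real.log (1 + a * p) / (p + ε)) := by
    field_simp
  rw [h1]
  exact mul_le_mul_of_nonneg_right hfe (div_nonneg (Lnonneg a ha hp) hpε.le)

private lemma cor1 (a ε p0 : ℝ) (ha : 0 < a) (hε : 0 < ε) (hp0 : 0 < p0)
    (hmax : ∀ p : ℝ, 0 < p →
        Real.log (1 + a * p) / (p + ε) ≤ Real.log (1 + a * p0) / (p0 + ε))
    {p q : ℝ} (hp : 0 < p) (hpq : p < q) (hq : q ≤ p0) :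
    Real.log (1 + a * p) / (p + ε) ≤ Real.log (1 + a * q) / (q + ε) := by
  rcases eq_or_lt_of_le hq with rfl | hq'
  · exact hmax p hp
  · by_contra hcon
    push_neg at hcon
    exact absurd (hmax q (lt_trans hp hpq)) (not_le.2 (keyA a ε ha hε hp hpq hq' hcon))

private lemma cor2 (a ε p0 : ℝ) (ha : 0 < a) (hε : 0 < ε) (hp0 : 0 < p0)
    (hmax : ∀ p : ℝ, 0 < p →
        Real.log (1 + a * p) / (p + ε) ≤ Real.log (1 + a * p0) / (p0 + ε))
    {q r : ℝ} (hq : p0 ≤ q) (hqr : q < r) :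
    Real.log (1 + a * r) / (r + ε) ≤ Real.log (1 + a * q) / (q + ε) := by
  rcases eq_or_lt_of_le hq with rfl | hq'
  · exact hmax r (lt_trans hp0 hqr)
  · by_contra hcon
    push_neg at hcon
    exact absurd (hmax q (lt_trans hp0 hq')) (not_le.2 (keyB a ε ha hε hp0 hq' hqr hcon))

theorem stmt_8 (a ε E_tol t p_peak p0 : ℝ)
    (ha : 0 < a) (hε : 0 < ε) (hE : 0 < E_tol) (ht : 0 < t) (hpeak : 0 < p_peak)
    (hp0 : 0 < p0)
    (hmax : ∀ p : ℝ, 0 < p →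
        Real.log (1 + a * p) / (p + ε) ≤ Real.log (1 + a * p0) / (p0 + ε))
    (huniq : ∀ p : ℝ, 0 < p →
        Real.log (1 + a * p) / (p + ε) = Real.log (1 + a * p0) / (p0 + ε) → p = p0)
    (pstar : ℝ)
    (hpstar : pstar =
        if p0 < p_peak then
          (if E_tol < t * (p0 + ε) then p0
           else if t * (p_peak + ε) < E_tol then p_peak
           else E_tol / t - ε)
        else p_peak)
    (τstar : ℝ) (hτstar : τstar = min t (E_tol / (pstar + ε))) :
    0 < pstar ∧ pstar ≤ p_peak ∧ 0 < τstar ∧ τstar ≤ t ∧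
      τstar * (pstar + ε) ≤ E_tol ∧
      ∀ τ p : ℝ, 0 < τ → τ ≤ t → 0 < p → p ≤ p_peak → τ * (p + ε) ≤ E_tol →
        τ * Real.log (1 + a * p) ≤ τstar * Real.log (1 + a * pstar) := by
  rcases lt_or_ge p0 p_peak with h1 | h1
  · rw [if_pos h1] at hpstar
    rcases lt_or_ge E_tol (t * (p0 + ε)) with h2 | h2
    · -- Case A : pstar = p0, τstar = E/(p0+ε)
      rw [if_pos h2] at hpstar
      subst hpstar
      have hpε : 0 < pstar + ε := by linarith
      have hdiv : E_tol / (pstar + ε) < t := by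
        rw [div_lt_iff₀ hpε]; linarith [h2]
      have hτ : τstar = E_tol / (pstar + ε) := by
        rw [hτstar, min_eq_right hdiv.le]
      refine ⟨hp0, h1.le, ?_, ?_, ?_, ?_⟩
      · rw [hτ]; positivity
      · rw [hτstar]; exact min_le_left _ _
      · rw [hτ, div_mul_cancel₀ _ (ne_of_gt hpε)]
      · intro τ p hτp hτt hp hpk hfe
        have h3 := ebound a ε E_tol ha hε hp hτp hfe
        have h4 := hmax p hp
        have h5 : τstar * Real.log (1 + a * pstar)
            = E_tol * (Real.log (1 + a * pstar) / (pstar + ε)) := by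
          rw [hτ]; ring
        rw [h5]
        exact h3.trans (mul_le_mul_of_nonneg_left h4 hE.le)
    · rw [if_neg (not_lt.2 h2)] at hpstar
      rcases lt_or_ge (t * (p_peak + ε)) E_tol with h3 | h3
      · -- Case B : pstar = p_peak, τstar = t
        rw [if_pos h3] at hpstar
        subst hpstar
        have hpε : 0 < pstar + ε := by linarith
        have hdiv : t < E_tol / (pstar + ε) := by
          rw [lt_div_iff₀ hpε]; linarith [h3]
        have hτ : τstar = t := by rw [hτstar, min_eq_left hdiv.le]
        refine ⟨hpeak, le_refl _, by rw [hτ]; exact ht, by rw [hτ], ?_, ?_⟩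
        · rw [hτ]; linarith [h3]
        · intro τ p hτp hτt hp hpk hfe
          rw [hτ]
          exact mul_le_mul hτt (Lmono a ha hp hpk) (Lnonneg a ha hp) ht.le
      · -- Case C : pstar = E_tol/t - ε
        rw [if_neg (not_lt.2 h3)] at hpstar
        have hpe : pstar + ε = E_tol / t := by rw [hpstar]; ring
        have hp0le : p0 ≤ pstar := by
          have : p0 + ε ≤ E_tol / t := by rw [le_div_iff₀ ht]; linarith [h2]
          linarith [hpe ▸ this]
        have hps : 0 < pstar := lt_of_lt_of_le hp0 hp0le
        have hpk' : pstar ≤ p_peak := by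
          have : E_tol / t ≤ p_peak + ε := by rw [div_le_iff₀ ht]; linarith [h3]
          linarith [hpe ▸ this]
        have hpε : 0 < pstar + ε := by linarith
        have hEt : E_tol / (pstar + ε) = t := by
          rw [hpe]; field_simp
        have hτ : τstar = t := by rw [hτstar, hEt, min_self]
        refine ⟨hps, hpk', by rw [hτ]; exact ht, by rw [hτ], ?_, ?_⟩
        · rw [hτ, hpe, mul_div_cancel₀ _ (ne_of_gt ht)]
        · intro τ p hτp hτt hp hpk hfe
          rw [hτ]
          rcases le_or_gt p pstar with hple | hpgt
          · exact mul_le_mul hτt (Lmono a ha hp hple) (Lnonneg a ha hp) ht.le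
          · have hg := cor2 a ε p0 ha hε hp0 hmax hp0le hpgt
            have h4 := ebound a ε E_tol ha hε hp hτp hfe
            have h5 : E_tol * (Real.log (1 + a * pstar) / (pstar + ε))
                = t * Real.log (1 + a * pstar) := by
              rw [hpe]
              field_simp
            calc τ * Real.log (1 + a * p)
                ≤ E_tol * (Real.log (1 + a * p) / (p + ε)) := h4
              _ ≤ E_tol * (Real.log (1 + a * pstar) / (pstar + ε)) :=
                  mul_le_mul_of_nonneg_left hg hE.le
              _ = t * Real.log (1 + a * pstar) := h5
  · -- Case D : p_peak ≤ p0, pstar = p_peak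
    rw [if_neg (not_lt.2 h1)] at hpstar
    subst hpstar
    have hpε : 0 < pstar + ε := by linarith
    have hτpos : 0 < τstar := by
      rw [hτstar]; exact lt_min ht (by positivity)
    refine ⟨hpeak, le_refl _, hτpos, by rw [hτstar]; exact min_le_left _ _, ?_, ?_⟩
    · have : τstar ≤ E_tol / (pstar + ε) := by rw [hτstar]; exact min_le_right _ _
      calc τstar * (pstar + ε) ≤ (E_tol / (pstar + ε)) * (pstar + ε) :=
            mul_le_mul_of_nonneg_right this hpε.le
        _ = E_tol := div_mul_cancel₀ _ (ne_of_gt hpε)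
    · intro τ p hτp hτt hp hpk hfe
      rcases le_total t (E_tol / (pstar + ε)) with hm | hm
      · rw [hτstar, min_eq_left hm]
        exact mul_le_mul hτt (Lmono a ha hp hpk) (Lnonneg a ha hp) ht.le
      · rw [hτstar, min_eq_right hm]
        have hg : Real.log (1 + a * p) / (p + ε)
            ≤ Real.log (1 + a * pstar) / (pstar + ε) := by
          rcases eq_or_lt_of_le hpk with rfl | hlt
          · exact le_refl _
          · exact cor1 a ε p0 ha hε hp0 hmax hp hlt h1
        have h4 := ebound a ε E_tol ha hε hp hτp hfe
        have h5 : E_tol * (Real.log (1 + a * pstar) / (pstar + ε))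
            = E_tol / (pstar + ε) * Real.log (1 + a * pstar) := by ring
        calc τ * Real.log (1 + a * p)
            ≤ E_tol * (Real.log (1 + a * p) / (p + ε)) := h4
          _ ≤ E_tol * (Real.log (1 + a * pstar) / (pstar + ε)) :=
              mul_le_mul_of_nonneg_left hg hE.le
          _ = E_tol / (pstar + ε) * Real.log (1 + a * pstar) := h5
end

section
/- With circuit power ε > 0, energy budget E > 0 and epoch length t satisfying E < t(p° + ε), partial-time transmission strictly beats full-time transmission: (E/(p°+ε)) · log(1 + p°) > t · log(1 + max(E/t − ε, 0)), where p° > 0 is the unique maximizer of p ↦ log(1+p)/(p+ε). -/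
theorem stmt_14 (ε E t p0 : ℝ) (hε : 0 < ε) (hE : 0 < E) (ht : 0 < t) (hp0 : 0 < p0)
    (hmax : ∀ p : ℝ, 0 < p → Real.log (1 + p) / (p + ε) ≤ Real.log (1 + p0) / (p0 + ε))
    (huniq : ∀ p : ℝ, 0 < p →
        Real.log (1 + p) / (p + ε) = Real.log (1 + p0) / (p0 + ε) → p = p0)
    (hpartial : E < t * (p0 + ε)) :
    t * Real.log (1 + max (E / t - ε) 0) < E / (p0 + ε) * Real.log (1 + p0) := by
  have hp0ε : 0 < p0 + ε := by linarith
  have hlogp0 : 0 < Real.log (1 + p0) := Real.log_pos (by linarith)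
  have hRHS : 0 < E / (p0 + ε) * Real.log (1 + p0) :=
    mul_pos (div_pos hE hp0ε) hlogp0
  rcases le_or_gt (E / t - ε) 0 with h | h
  · rw [max_eq_right h]
    simpa using hRHS
  · rw [max_eq_left h.le]
    set p := E / t - ε with hpdef
    have hpε : p + ε = E / t := by ring
    have hEeq : E = t * (p + ε) := by
      rw [hpε]; field_simp
    have hplt : p < p0 := by
      have : t * (p + ε) < t * (p0 + ε) := by rw [← hEeq]; exact hpartial
      have := (mul_lt_mul_iff_right₀ ht).mp this
      linarith
    have hne : p ≠ p0 := ne_of_lt hplt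
    have hlt : Real.log (1 + p) / (p + ε) < Real.log (1 + p0) / (p0 + ε) :=
      lt_of_le_of_ne (hmax p h) (fun heq => hne (huniq p h heq))
    have hpεpos : 0 < p + ε := by linarith
    have key : E * (Real.log (1 + p) / (p + ε)) < E * (Real.log (1 + p0) / (p0 + ε)) :=
      (mul_lt_mul_iff_right₀ hE).mpr hlt
    calc t * Real.log (1 + p) = E * (Real.log (1 + p) / (p + ε)) := by
          rw [hEeq]; field_simp
      _ < E * (Real.log (1 + p0) / (p0 + ε)) := key
      _ = E / (p0 + ε) * Real.log (1 + p0) := by ring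
end
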